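/- For every M ≥ 1 and every Borel probability measure μ on ℝ^M with support contained in [−1,1]^M, there exist Hermitian matrices O_1, …, O_M on ℂ^{M+1}, each of operator (spectral) norm 2M − 1, and a measurable map ψ : (0,1) → { unit vectors of ℂ^{M+1} } such that the pushforward of the uniform probability measure on (0,1) under the map x ↦ ( ⟨ψ(x), O_m ψ(x)⟩ )_{m=1,…,M} equals μ. (This is the observable-level content of the dense-encoding universal sampler, which uses n = ⌈log₂(M+1)⌉ qubits, i.e. Hilbert space dimension M+1 ≤ 2^n, and observables of norm Θ(M).) -/

import Mathlib

open Matrix MeasureTheory Set ProbabilityTheory Filter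

lemma quantile_map (ν : Measure ℝ) [IsProbabilityMeasure ν]
    (hν : ν (Set.Ioo (-1 : ℝ) 1)ᶜ = 0) :
    ∃ g : ℝ → ℝ, Measurable g ∧
      Measure.map g (volume.restrict (Set.Ioo (0 : ℝ) 1)) = ν := by
  set F : StieltjesFunction ℝ := cdf ν with hFdef
  have hIoo : ν (Set.Ioo (-1 : ℝ) 1) = 1 :=
    (prob_compl_eq_zero_iff measurableSet_Ioo).mp hν
  have hF1 : F 1 = 1 := by
    have h1 : ν (Iic 1) = 1 := le_antisymm prob_le_one
      (hIoo ▸ measure_mono (fun x hx => le_of_lt hx.2))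
    have := ofReal_cdf ν 1
    rw [h1] at this
    exact ENNReal.ofReal_eq_one.mp this
  have hFneg : ∀ y : ℝ, y ≤ -1 → F y = 0 := by
    intro y hy
    have h0 : ν (Iic y) = 0 := by
      refine measure_mono_null (fun x hx => ?_) hν
      simp only [mem_compl_iff, mem_Ioo, not_and, not_lt]
      intro hx1
      exact absurd (lt_of_le_of_lt (le_trans (mem_Iic.mp hx) hy) hx1) (lt_irrefl _)
    have := ofReal_cdf ν y
    rw [h0] at this
    exact le_antisymm (ENNReal.ofReal_eq_zero.mp this) (cdf_nonneg ν y)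
  set T : ℝ → Set ℝ := fun x => ({y | x ≤ F y} ∩ Ici (-1)) ∪ Ici 1 with hTdef
  have hTne : ∀ x, (T x).Nonempty := fun x => ⟨1, Or.inr self_mem_Ici⟩
  have hTbdd : ∀ x, BddBelow (T x) := by
    intro x
    refine ⟨-1, fun z hz => ?_⟩
    rcases hz with hz | hz
    · exact hz.2
    · linarith [mem_Ici.mp hz]
  set g : ℝ → ℝ := fun x => sInf (T x) with hgdef
  have hgmono : Monotone g := by
    intro x₁ x₂ h
    refine csInf_le_csInf (hTbdd x₁) (hTne x₂) ?_
    intro z hz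
    rcases hz with hz | hz
    · exact Or.inl ⟨le_trans h hz.1, hz.2⟩
    · exact Or.inr hz
  have hgm : Measurable g := hgmono.measurable
  have key : ∀ x ∈ Set.Ioo (0:ℝ) 1, ∀ y : ℝ, (g x ≤ y ↔ x ≤ F y) := by
    intro x hx y
    constructor
    · intro h
      have heps : ∀ ε : ℝ, 0 < ε → x ≤ F (y + ε) := by
        intro ε hε
        have hlt : sInf (T x) < y + ε := lt_of_le_of_lt h (by linarith)
        obtain ⟨z, hzT, hzlt⟩ := exists_lt_of_csInf_lt (hTne x) hlt
        rcases hzT with hz | hz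
        · exact le_trans hz.1 (F.mono (le_of_lt hzlt))
        · calc x ≤ 1 := le_of_lt hx.2
            _ = F 1 := hF1.symm
            _ ≤ F (y + ε) := F.mono (le_trans (mem_Ici.mp hz) (le_of_lt hzlt))
      have htd : Tendsto (fun ε : ℝ => F (y + ε)) (nhdsWithin 0 (Set.Ioi 0)) (nhds (F y)) := by
        have h1 : Tendsto (fun ε : ℝ => y + ε) (nhdsWithin 0 (Set.Ioi 0))
            (nhdsWithin y (Ici y)) := by
          refine tendsto_nhdsWithin_of_tendsto_nhds_of_eventually_within _ ?_ ?_
          · have : Tendsto (fun ε : ℝ => y + ε) (nhds 0) (nhds (y + 0)) :=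
              (continuous_const.add continuous_id).tendsto 0
            simpa using this.mono_left nhdsWithin_le_nhds
          · filter_upwards [self_mem_nhdsWithin] with ε (hε : ε ∈ Set.Ioi 0)
            exact le_of_lt (by linarith [mem_Ioi.mp hε] : y < y + ε)
        exact (F.right_continuous y).tendsto.comp h1
      refine ge_of_tendsto htd ?_
      filter_upwards [self_mem_nhdsWithin] with ε hε
      exact heps ε (mem_Ioi.mp hε)
    · intro h
      have hy : -1 ≤ y := by
        by_contra hc
        push_neg at hc
        have := hFneg y (le_of_lt hc)
        linarith [hx.1, this ▸ h]
      exact csInf_le (hTbdd x) (Or.inl ⟨h, hy⟩)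
  refine ⟨g, hgm, ?_⟩
  have instP : IsProbabilityMeasure (volume.restrict (Set.Ioo (0:ℝ) 1)) :=
    ⟨by simp⟩
  have : IsProbabilityMeasure (Measure.map g (volume.restrict (Set.Ioo (0:ℝ) 1))) :=
    Measure.isProbabilityMeasure_map hgm.aemeasurable
  refine Measure.ext_of_Iic _ _ (fun a => ?_)
  rw [Measure.map_apply hgm measurableSet_Iic,
    Measure.restrict_apply (hgm measurableSet_Iic)]
  have hseteq : g ⁻¹' Iic a ∩ Set.Ioo 0 1 = Iic (F a) ∩ Set.Ioo 0 1 := by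
    ext x
    simp only [mem_inter_iff, mem_preimage, mem_Iic]
    constructor
    · rintro ⟨h1, h2⟩; exact ⟨(key x h2 a).mp h1, h2⟩
    · rintro ⟨h1, h2⟩; exact ⟨(key x h2 a).mpr h1, h2⟩
  rw [hseteq, ← ofReal_cdf ν a]
  rcases lt_or_ge (F a) 1 with hc | hc
  · have : Iic (F a) ∩ Set.Ioo (0:ℝ) 1 = Set.Ioc 0 (F a) := by
      ext x
      simp only [mem_inter_iff, mem_Iic, mem_Ioo, mem_Ioc]
      constructor
      · rintro ⟨h1, h2, h3⟩; exact ⟨h2, h1⟩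
      · rintro ⟨h1, h2⟩; exact ⟨h2, h1, lt_of_le_of_lt h2 hc⟩
    rw [this, Real.volume_Ioc, sub_zero]
  · have hc1 : F a = 1 := le_antisymm (cdf_le_one ν a) hc
    have : Iic (F a) ∩ Set.Ioo (0:ℝ) 1 = Set.Ioo 0 1 := by
      ext x
      simp only [mem_inter_iff, mem_Iic, mem_Ioo]
      exact ⟨fun h => h.2, fun h => ⟨le_trans (le_of_lt h.2) hc, h⟩⟩
    rw [this, Real.volume_Ioo, sub_zero, hc1]

lemma exists_map_unitInterval (M : ℕ) (μ : Measure (Fin M → ℝ)) [IsProbabilityMeasure μ] :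
    ∃ T : ℝ → (Fin M → ℝ), Measurable T ∧
      Measure.map T (volume.restrict (Set.Ioo (0 : ℝ) 1)) = μ := by
  obtain ⟨f₀, hf₀⟩ := MeasureTheory.exists_measurableEmbedding_real (Fin M → ℝ)
  set e := orderIsoIooNegOneOne ℝ with he
  have hhc : Continuous fun t : ℝ => (e t : ℝ) := continuous_subtype_val.comp e.continuous
  have hhi : Function.Injective fun t : ℝ => (e t : ℝ) :=
    Subtype.val_injective.comp e.injective
  have hemb : MeasurableEmbedding fun t : ℝ => (e t : ℝ) := hhc.measurableEmbedding hhi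
  set f : (Fin M → ℝ) → ℝ := fun v => (e (f₀ v) : ℝ) with hfdef
  have hf : MeasurableEmbedding f := hemb.comp hf₀
  set ν := Measure.map f μ with hνdef
  have hPν : IsProbabilityMeasure ν := Measure.isProbabilityMeasure_map hf.measurable.aemeasurable
  have hν : ν (Set.Ioo (-1:ℝ) 1)ᶜ = 0 := by
    rw [hνdef, Measure.map_apply hf.measurable measurableSet_Ioo.compl]
    have : f ⁻¹' (Set.Ioo (-1:ℝ) 1)ᶜ = ∅ := by
      ext v
      simp only [Set.mem_preimage, Set.mem_compl_iff, Set.mem_empty_iff_false, iff_false,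
        not_not]
      exact (e (f₀ v)).2
    rw [this, measure_empty]
  obtain ⟨g, hgm, hgmap⟩ := quantile_map ν hν
  obtain ⟨r, hrm, hrf⟩ := hf.exists_measurable_extend measurable_id
    (fun _ => ⟨fun _ => 0⟩)
  refine ⟨r ∘ g, hrm.comp hgm, ?_⟩
  rw [← Measure.map_map hrm hgm, hgmap, hνdef, Measure.map_map hrm hf.measurable, hrf,
    Measure.map_id]


noncomputable def Omat (M : ℕ) (c : ℝ) (m : Fin M) : Matrix (Fin (M+1)) (Fin (M+1)) ℂ :=
  Matrix.of fun i j : Fin (M+1) =>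
    if (i = 0 ∧ j = m.succ) ∨ (i = m.succ ∧ j = 0) then (c : ℂ) else 0

lemma aux_mulVec (M : ℕ) (c : ℝ) (m : Fin M) (w : Fin (M+1) → ℂ) :
    (Omat M c m).mulVec w
      = fun i => if i = 0 then c * w m.succ else if i = m.succ then c * w 0 else 0 := by
  funext i
  simp only [Omat, Matrix.mulVec, dotProduct, Matrix.of_apply]
  by_cases hi0 : i = 0
  · subst hi0
    have h0 : ∀ j : Fin (M+1),
        (if ((0:Fin (M+1)) = 0 ∧ j = m.succ) ∨ ((0:Fin (M+1)) = m.succ ∧ j = 0)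
          then (c:ℂ) else 0) * w j = if j = m.succ then (c:ℂ) * w j else 0 := by
      intro j
      have : ¬ ((0:Fin (M+1)) = m.succ) := (Fin.succ_ne_zero m).symm
      by_cases hj : j = m.succ <;> simp [hj, this]
    rw [Finset.sum_congr rfl fun j _ => h0 j, Finset.sum_ite_eq' Finset.univ m.succ]
    simp
  · by_cases him : i = m.succ
    · subst him
      have h0 : ∀ j : Fin (M+1),
          (if (m.succ = 0 ∧ j = m.succ) ∨ (m.succ = m.succ ∧ j = 0)
            then (c:ℂ) else 0) * w j = if j = 0 then (c:ℂ) * w j else 0 := by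
        intro j
        by_cases hj : j = 0 <;> simp [hj, Fin.succ_ne_zero m]
      rw [Finset.sum_congr rfl fun j _ => h0 j, Finset.sum_ite_eq' Finset.univ 0]
      simp [Fin.succ_ne_zero m]
    · have h0 : ∀ j : Fin (M+1),
          (if (i = 0 ∧ j = m.succ) ∨ (i = m.succ ∧ j = 0)
            then (c:ℂ) else 0) * w j = 0 := by
        intro j
        simp [hi0, him]
      rw [Finset.sum_congr rfl fun j _ => h0 j]
      simp [hi0, him]

lemma Omat_isHermitian (M : ℕ) (c : ℝ) (m : Fin M) : (Omat M c m).IsHermitian := by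
  ext i j
  simp only [Omat, Matrix.conjTranspose_apply, Matrix.of_apply]
  rw [apply_ite (star : ℂ → ℂ)]
  simp only [star_zero, Complex.star_def, Complex.conj_ofReal]
  congr 1
  simp only [eq_iff_iff]
  tauto

lemma Omat_dot (M : ℕ) (c : ℝ) (m : Fin M) (w : Fin (M+1) → ℂ) :
    star w ⬝ᵥ (Omat M c m).mulVec w
      = (c:ℂ) * (star (w 0) * w m.succ + star (w m.succ) * w 0) := by
  rw [aux_mulVec]
  simp only [dotProduct, Pi.star_apply]
  have hsupp : ∀ i : Fin (M+1), i ∉ ({0, m.succ} : Finset (Fin (M+1))) →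
      star (w i) * (if i = 0 then (c:ℂ) * w m.succ else if i = m.succ then (c:ℂ) * w 0 else 0)
        = 0 := by
    intro i hi
    simp only [Finset.mem_insert, Finset.mem_singleton, not_or] at hi
    simp [hi.1, hi.2]
  rw [← Finset.sum_subset (Finset.subset_univ ({0, m.succ} : Finset (Fin (M+1))))
    (fun i _ hi => hsupp i hi)]
  rw [Finset.sum_pair (Fin.succ_ne_zero m).symm]
  simp [(Fin.succ_ne_zero m).symm, Fin.succ_ne_zero m]
  ring

lemma Omat_norm (M : ℕ) (c : ℝ) (hc : 0 < c) (m : Fin M) :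
    ‖Matrix.toEuclideanCLM (𝕜 := ℂ) (Omat M c m)‖ = c := by
  set A := Matrix.toEuclideanCLM (𝕜 := ℂ) (Omat M c m) with hA
  have happly : ∀ v : EuclideanSpace ℂ (Fin (M+1)), ∀ i,
      A v i = if i = 0 then (c:ℂ) * v m.succ else if i = m.succ then (c:ℂ) * v 0 else 0 := by
    intro v i
    have h1 := congrFun (Matrix.ofLp_toEuclideanCLM (𝕜 := ℂ) (n := Fin (M+1))
      (Omat M c m) v) i
    rw [aux_mulVec] at h1
    exact h1
  refine le_antisymm (ContinuousLinearMap.opNorm_le_bound _ hc.le fun v => ?_) ?_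
  · rw [EuclideanSpace.norm_eq, EuclideanSpace.norm_eq]
    have hsum : ∑ i, ‖A v i‖^2 = ‖(c:ℂ) * v m.succ‖^2 + ‖(c:ℂ) * v 0‖^2 := by
      rw [← Finset.sum_subset (Finset.subset_univ ({0, m.succ} : Finset (Fin (M+1))))
        (fun i _ hi => ?_)]
      · rw [Finset.sum_pair (Fin.succ_ne_zero m).symm, happly, happly]
        simp [(Fin.succ_ne_zero m).symm, Fin.succ_ne_zero m]
      · simp only [Finset.mem_insert, Finset.mem_singleton, not_or] at hi
        rw [happly]
        simp [hi.1, hi.2]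
    rw [hsum]
    have h1 : ∀ z : ℂ, ‖(c:ℂ) * z‖^2 = c^2 * ‖z‖^2 := by
      intro z
      rw [norm_mul, Complex.norm_real, Real.norm_eq_abs, abs_of_pos hc, mul_pow]
    have hle : ‖(c:ℂ) * v m.succ‖^2 + ‖(c:ℂ) * v 0‖^2 ≤ c^2 * ∑ i, ‖v i‖^2 := by
      rw [h1, h1]
      have h2 : ‖v m.succ‖^2 + ‖v 0‖^2 ≤ ∑ i, ‖v i‖^2 := by
        have h3 := Finset.sum_le_sum_of_subset_of_nonneg
          (Finset.subset_univ ({m.succ, 0} : Finset (Fin (M+1))))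
          (fun i _ _ => sq_nonneg ‖v i‖)
        rwa [Finset.sum_pair (Fin.succ_ne_zero m)] at h3
      nlinarith [sq_nonneg c]
    calc √(‖(c:ℂ) * v m.succ‖^2 + ‖(c:ℂ) * v 0‖^2) ≤ √(c^2 * ∑ i, ‖v i‖^2) :=
          Real.sqrt_le_sqrt hle
      _ = c * √(∑ i, ‖v i‖^2) := by rw [Real.sqrt_mul (sq_nonneg c), Real.sqrt_sq hc.le]
  · set w : Fin (M+1) → ℂ := fun i => if i = 0 ∨ i = m.succ then 1 else 0 with hw
    set v : EuclideanSpace ℂ (Fin (M+1)) := (WithLp.equiv 2 _).symm w with hv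
    have hvi : ∀ i, v i = w i := fun i => rfl
    have hv0 : v 0 = 1 := by rw [hvi]; simp [hw]
    have hAv : A v = (c:ℂ) • v := by
      ext i
      rw [happly]
      have : ((c:ℂ) • v) i = (c:ℂ) * w i := rfl
      rw [this]
      by_cases hi0 : i = 0
      · rw [if_pos hi0, hvi, hi0]
        simp [hw]
      · by_cases him : i = m.succ
        · rw [if_neg hi0, if_pos him, hvi, him]
          simp [hw]
        · rw [if_neg hi0, if_neg him]
          simp [hw, hi0, him]
    have hvne : v ≠ 0 := by
      intro h
      have h1 : (1:ℂ) = 0 := by rw [← hv0, h]; rfl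
      exact one_ne_zero h1
    have hvpos : 0 < ‖v‖ := norm_pos_iff.mpr hvne
    have hle := A.le_opNorm v
    rw [hAv, norm_smul, Complex.norm_real, Real.norm_eq_abs, abs_of_pos hc] at hle
    exact le_of_mul_le_mul_right hle hvpos

/-- dense-encoding universal sampler, observable-level content. For every
`M ≥ 1` and every Borel probability measure `μ` on `ℝ^M` supported in `[-1,1]^M`, there are
Hermitian observables `O_1, …, O_M` on `ℂ^{M+1}`, each of spectral norm `2M - 1`, and a
measurable family of unit vectors `ψ : (0,1) → ℂ^{M+1}` such that the pushforward of the uniform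
measure on `(0,1)` under `x ↦ (⟨ψ(x), O_m ψ(x)⟩)_m` equals `μ`. -/

theorem stmt_9 (M : ℕ) (hM : 1 ≤ M) (μ : Measure (Fin M → ℝ)) [IsProbabilityMeasure μ]
    (hsupp : μ (Set.univ.pi fun _ : Fin M => Set.Icc (-1 : ℝ) 1)ᶜ = 0) :
    ∃ O : Fin M → Matrix (Fin (M + 1)) (Fin (M + 1)) ℂ,
      (∀ m, (O m).IsHermitian ∧ ‖Matrix.toEuclideanCLM (𝕜 := ℂ) (O m)‖ = 2 * M - 1) ∧
      ∃ ψ : ℝ → Fin (M + 1) → ℂ, Measurable ψ ∧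
        (∀ x ∈ Set.Ioo (0 : ℝ) 1, star (ψ x) ⬝ᵥ ψ x = 1) ∧
        Measure.map (fun x : ℝ => fun m : Fin M => (star (ψ x) ⬝ᵥ (O m).mulVec (ψ x)).re)
          (volume.restrict (Set.Ioo (0 : ℝ) 1)) = μ := by
  have hM1 : (1:ℝ) ≤ (M:ℝ) := by exact_mod_cast hM
  set c : ℝ := 2 * (M:ℝ) - 1 with hcdef
  have hc0 : 0 < c := by rw [hcdef]; linarith
  have hcne : c ≠ 0 := ne_of_gt hc0
  obtain ⟨T0, hT0m, hT0map⟩ := exists_map_unitInterval M μ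
  set T : ℝ → Fin M → ℝ := fun x j => max (-1) (min 1 (T0 x j)) with hTdef
  have hTm : Measurable T := measurable_pi_lambda _ fun j =>
    Measurable.max measurable_const
      (Measurable.min measurable_const ((measurable_pi_apply j).comp hT0m))
  have hclampm : Measurable (fun v : Fin M → ℝ => fun j => max (-1) (min 1 (v j))) :=
    measurable_pi_lambda _ fun j =>
      Measurable.max measurable_const (Measurable.min measurable_const (measurable_pi_apply j))
  have hTmap : Measure.map T (volume.restrict (Set.Ioo (0:ℝ) 1)) = μ := by
    have hcomp : T = (fun v : Fin M → ℝ => fun j => max (-1) (min 1 (v j))) ∘ T0 := rfl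
    rw [hcomp, ← Measure.map_map hclampm hT0m, hT0map]
    have hae : (fun v : Fin M → ℝ => fun j => max (-1) (min 1 (v j))) =ᵐ[μ] id := by
      have hbox : ∀ᵐ v ∂μ, v ∈ (Set.univ.pi fun _ : Fin M => Set.Icc (-1:ℝ) 1) := by
        rw [ae_iff]
        exact hsupp
      filter_upwards [hbox] with v hv
      have hvj : ∀ j, v j ∈ Set.Icc (-1:ℝ) 1 := fun j => hv j (Set.mem_univ j)
      funext j
      have h1 := (hvj j).1
      have h2 := (hvj j).2
      simp only [id]
      rw [min_eq_right h2, max_eq_right h1]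
    rw [Measure.map_congr hae, Measure.map_id]
  have hTbd : ∀ x j, -1 ≤ T x j ∧ T x j ≤ 1 := fun x j =>
    ⟨le_max_left _ _, max_le (by linarith) (min_le_left _ _)⟩
  set u : ℝ → Fin M → ℝ := fun x j => T x j / (Real.sqrt 2 * c) with hudef
  have hum : ∀ j, Measurable fun x => u x j := fun j =>
    ((measurable_pi_apply j).comp hTm).div_const _
  have hsq2 : (0:ℝ) < Real.sqrt 2 := Real.sqrt_pos.mpr (by norm_num)
  have hss : Real.sqrt 2 * Real.sqrt 2 = 2 := Real.mul_self_sqrt (by norm_num)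
  have hsumle : ∀ x, ∑ j, (u x j)^2 ≤ 1/2 := by
    intro x
    have hMc : (M:ℝ) ≤ c^2 := by rw [hcdef]; nlinarith
    have hterm : ∀ j, (u x j)^2 ≤ 1/(2*c^2) := by
      intro j
      have h1 : (T x j)^2 ≤ 1 := by nlinarith [(hTbd x j).1, (hTbd x j).2]
      rw [hudef]
      simp only
      rw [div_pow, mul_pow]
      rw [show Real.sqrt 2 ^ 2 = 2 from by rw [sq, hss]]
      gcongr
    calc ∑ j, (u x j)^2 ≤ ∑ _j : Fin M, 1/(2*c^2) :=
          Finset.sum_le_sum (fun j _ => hterm j)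
      _ = (M:ℝ) * (1/(2*c^2)) := by
          rw [Finset.sum_const, Finset.card_univ, Fintype.card_fin, nsmul_eq_mul]
      _ ≤ c^2 * (1/(2*c^2)) := by gcongr
      _ = 1/2 := by field_simp
  set s : ℝ → ℝ := fun x => Real.sqrt (1/2 - ∑ j, (u x j)^2) with hsdef
  have hsm : Measurable s := Real.continuous_sqrt.measurable.comp
    (measurable_const.sub (Finset.measurable_sum _ (fun j _ => ((hum j).pow_const 2))))
  have hs2 : ∀ x, (s x)^2 = 1/2 - ∑ j, (u x j)^2 := fun x =>
    Real.sq_sqrt (by linarith [hsumle x])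
  set j₀ : Fin M := ⟨0, hM⟩ with hj₀
  set ψ : ℝ → Fin (M+1) → ℂ := fun x => Fin.cons (((Real.sqrt 2)⁻¹ : ℝ) : ℂ)
    (fun j => ((u x j : ℝ) : ℂ) + if j = j₀ then ((s x : ℝ) : ℂ) * Complex.I else 0) with hψdef
  have hψ0 : ∀ x, ψ x 0 = (((Real.sqrt 2)⁻¹ : ℝ) : ℂ) := by
    intro x; rw [hψdef]; simp
  have hψsucc : ∀ x (j : Fin M), ψ x j.succ
      = ((u x j : ℝ) : ℂ) + if j = j₀ then ((s x : ℝ) : ℂ) * Complex.I else 0 := by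
    intro x j; rw [hψdef]; simp
  have hψm : Measurable ψ := by
    apply measurable_pi_lambda
    intro i
    induction i using Fin.cases with
    | zero =>
      simp only [hψ0]
      exact measurable_const
    | succ j =>
      simp only [hψsucc]
      apply Measurable.add
      · exact Complex.measurable_ofReal.comp (hum j)
      · by_cases hj : j = j₀
        · simp only [if_pos hj]
          exact (Complex.measurable_ofReal.comp hsm).mul_const _
        · simp only [if_neg hj]
          exact measurable_const
  have hconj : ∀ z : ℂ, star z * z = (Complex.normSq z : ℂ) := by
    intro z
    rw [Complex.star_def]
    rw [Complex.normSq_eq_conj_mul_self]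
  have hunit : ∀ x, star (ψ x) ⬝ᵥ ψ x = 1 := by
    intro x
    rw [dotProduct]
    simp only [Pi.star_apply]
    rw [Fin.sum_univ_succ]
    have h0 : star (ψ x 0) * ψ x 0 = ((1/2 : ℝ) : ℂ) := by
      rw [hψ0, hconj, Complex.normSq_ofReal, ← mul_inv, hss]
      norm_num
    have hsucc : ∀ j : Fin M, star (ψ x j.succ) * ψ x j.succ
        = (((u x j)^2 + if j = j₀ then (s x)^2 else 0 : ℝ) : ℂ) := by
      intro j
      rw [hconj, hψsucc]
      by_cases hj : j = j₀
      · rw [if_pos hj, if_pos hj, Complex.normSq_add_mul_I]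
      · rw [if_neg hj, if_neg hj, add_zero, add_zero, Complex.normSq_ofReal, sq]
    rw [Finset.sum_congr rfl fun j _ => hsucc j, h0]
    rw [← Complex.ofReal_sum, ← Complex.ofReal_add]
    have hreal : (1/2 : ℝ) + ∑ j, ((u x j)^2 + if j = j₀ then (s x)^2 else 0) = 1 := by
      rw [Finset.sum_add_distrib, Finset.sum_ite_eq' Finset.univ j₀]
      simp only [Finset.mem_univ, if_pos]
      rw [hs2 x]
      ring
    rw [hreal, Complex.ofReal_one]
  have hexp : ∀ x (m : Fin M), (star (ψ x) ⬝ᵥ (Omat M c m).mulVec (ψ x)).re = T x m := by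
    intro x m
    rw [Omat_dot]
    set z := ψ x m.succ with hz
    have hzre : z.re = u x m := by
      rw [hz, hψsucc]
      by_cases hj : m = j₀
      · rw [if_pos hj]
        simp
      · rw [if_neg hj]
        simp
    have hstar : star (ψ x 0) = (((Real.sqrt 2)⁻¹ : ℝ) : ℂ) := by
      rw [hψ0, Complex.star_def, Complex.conj_ofReal]
    have hval : (c:ℂ) * (star (ψ x 0) * z + star z * ψ x 0)
        = ((c * ((Real.sqrt 2)⁻¹ * (2 * z.re)) : ℝ) : ℂ) := by
      rw [hstar, hψ0]
      have h3 : ((((Real.sqrt 2)⁻¹ : ℝ)) : ℂ) * z + star z * ((((Real.sqrt 2)⁻¹ : ℝ)) : ℂ)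
          = ((((Real.sqrt 2)⁻¹ : ℝ)) : ℂ) * (z + (starRingEnd ℂ) z) := by
        rw [Complex.star_def]; ring
      rw [h3, Complex.add_conj]
      push_cast
      ring
    rw [hval, Complex.ofReal_re, hzre, hudef]
    simp only
    field_simp
    linear_combination (-(T x m)) * hss
  refine ⟨fun m => Omat M c m, fun m => ⟨Omat_isHermitian M c m, ?_⟩, ψ, hψm,
    fun x _ => hunit x, ?_⟩
  · exact Omat_norm M c hc0 m
  · have heq : (fun x : ℝ => fun m : Fin M => (star (ψ x) ⬝ᵥ (Omat M c m).mulVec (ψ x)).re)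
        = T := by
      funext x m
      exact hexp x m
    rw [heq, hTmap]
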